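/- Let f_k(r) = r^k e^{-r}/k! and let E ⊆ [0,∞) be a measurable set of finite measure |E|. Then for every k ≥ 0, ∫_E f_k(r) dr ≤ ∫_0^{|E|} e^{-r} dr = 1 − e^{−|E|}. -/

import Mathlib

open MeasureTheory

/-- The gamma density `f_k(r) = r^k e^{-r}/k!`. -/
noncomputable def gammaDens (k : ℕ) (r : ℝ) : ℝ := r ^ k * Real.exp (-r) / (Nat.factorial k)

lemma continuous_gammaDens (k : ℕ) : Continuous (gammaDens k) := by
  unfold gammaDens; fun_prop

lemma integrableOn_exp_neg_Ici : IntegrableOn (fun u : ℝ => Real.exp (-u)) (Set.Ici 0) := by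
  have h := exp_neg_integrableOn_Ioi (0 : ℝ) (one_pos)
  rw [integrableOn_Ici_iff_integrableOn_Ioi]
  simpa using h

/-- FTC computation: `∫_0^m e^{-u} du = 1 - e^{-m}`. -/
lemma exp_neg_interval_integral (m : ℝ) :
    (∫ u in (0:ℝ)..m, Real.exp (-u)) = 1 - Real.exp (-m) := by
  have h := intervalIntegral.integral_comp_neg (a := (0:ℝ)) (b := m) (fun x => Real.exp x)
  rw [h, integral_exp]
  simp

/-- Base case: an exponential integral over a set of finite measure is dominated by the
integral over the initial interval of the same measure. -/
lemma base_exp (F : Set ℝ) (hF : MeasurableSet F) (hF0 : F ⊆ Set.Ici 0)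
    (hfin : volume F < ⊤) :
    (∫ u in F, Real.exp (-u)) ≤ 1 - Real.exp (-(volume F).toReal) := by
  set m := (volume F).toReal with hm_def
  have hm : 0 ≤ m := ENNReal.toReal_nonneg
  have hvolF : volume F = ENNReal.ofReal m := (ENNReal.ofReal_toReal hfin.ne).symm
  set M : Set ℝ := Set.Ico 0 m with hM_def
  have hMmeas : MeasurableSet M := measurableSet_Ico
  have hvolM : volume M = ENNReal.ofReal m := by
    rw [hM_def, Real.volume_Ico, sub_zero]
  have hM0 : M ⊆ Set.Ici 0 := fun x hx => hx.1
  -- integrability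
  have hintF : IntegrableOn (fun u : ℝ => Real.exp (-u)) F :=
    integrableOn_exp_neg_Ici.mono_set hF0
  have hintM : IntegrableOn (fun u : ℝ => Real.exp (-u)) M :=
    integrableOn_exp_neg_Ici.mono_set hM0
  -- measure equality of the symmetric differences
  have hmeq : volume (F \ M) = volume (M \ F) := by
    have h1 : volume (F ∩ M) + volume (F \ M) = volume F := measure_inter_add_diff F hMmeas
    have h2 : volume (M ∩ F) + volume (M \ F) = volume M := measure_inter_add_diff M hF
    have hIfin : volume (F ∩ M) ≠ ⊤ :=
      (lt_of_le_of_lt (measure_mono Set.inter_subset_left) hfin).ne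
    rw [Set.inter_comm] at h2
    have : volume (F ∩ M) + volume (F \ M) = volume (F ∩ M) + volume (M \ F) := by
      rw [h1, h2, hvolF, hvolM]
    exact (ENNReal.add_right_inj hIfin).mp this
  -- bound the part of F outside M
  have hFdiff : (∫ u in F \ M, Real.exp (-u)) ≤ Real.exp (-m) * (volume (F \ M)).toReal := by
    have hb : ∀ u ∈ F \ M, Real.exp (-u) ≤ Real.exp (-m) := by
      intro u hu
      have hu0 : 0 ≤ u := hF0 hu.1
      have : m ≤ u := by
        by_contra h
        exact hu.2 ⟨hu0, lt_of_not_ge h⟩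
      exact Real.exp_le_exp.mpr (neg_le_neg this)
    calc (∫ u in F \ M, Real.exp (-u)) ≤ ∫ _u in F \ M, Real.exp (-m) := by
          refine setIntegral_mono_on (hintF.mono_set Set.diff_subset)
            ((integrableOn_const_iff (C := Real.exp (-m))).mpr (Or.inr ?_)) (hF.diff hMmeas) hb
          exact lt_of_le_of_lt (measure_mono Set.diff_subset) hfin
      _ = Real.exp (-m) * (volume (F \ M)).toReal := by
          rw [setIntegral_const, smul_eq_mul, measureReal_def]; ring
  -- bound the part of M outside F from below
  have hMdiff : Real.exp (-m) * (volume (M \ F)).toReal ≤ ∫ u in M \ F, Real.exp (-u) := by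
    have hb : ∀ u ∈ M \ F, Real.exp (-m) ≤ Real.exp (-u) := by
      intro u hu
      exact Real.exp_le_exp.mpr (neg_le_neg (le_of_lt hu.1.2))
    calc Real.exp (-m) * (volume (M \ F)).toReal
        = ∫ _u in M \ F, Real.exp (-m) := by rw [setIntegral_const, smul_eq_mul, measureReal_def]; ring
      _ ≤ ∫ u in M \ F, Real.exp (-u) := by
          refine setIntegral_mono_on ((integrableOn_const_iff (C := Real.exp (-m))).mpr (Or.inr ?_))
            (hintM.mono_set Set.diff_subset) (hMmeas.diff hF) hb
          exact lt_of_le_of_lt (measure_mono Set.diff_subset)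
            (by rw [hvolM]; exact ENNReal.ofReal_lt_top)
  -- the integral over M equals 1 - e^{-m}
  have hMint : (∫ u in M, Real.exp (-u)) = 1 - Real.exp (-m) := by
    rw [hM_def, MeasureTheory.integral_Ico_eq_integral_Ioo, ← MeasureTheory.integral_Ioc_eq_integral_Ioo,
      ← intervalIntegral.integral_of_le hm]
    exact exp_neg_interval_integral m
  -- put things together
  have split_F : (∫ u in F ∩ M, Real.exp (-u)) + (∫ u in F \ M, Real.exp (-u))
      = ∫ u in F, Real.exp (-u) := integral_inter_add_diff hMmeas hintF
  have split_M : (∫ u in M ∩ F, Real.exp (-u)) + (∫ u in M \ F, Real.exp (-u))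
      = ∫ u in M, Real.exp (-u) := integral_inter_add_diff hF hintM
  have hic : (∫ u in F ∩ M, Real.exp (-u)) = ∫ u in M ∩ F, Real.exp (-u) := by
    rw [Set.inter_comm]
  calc (∫ u in F, Real.exp (-u))
      = (∫ u in F ∩ M, Real.exp (-u)) + (∫ u in F \ M, Real.exp (-u)) := split_F.symm
    _ ≤ (∫ u in F ∩ M, Real.exp (-u)) + Real.exp (-m) * (volume (F \ M)).toReal := by
        linarith
    _ = (∫ u in M ∩ F, Real.exp (-u)) + Real.exp (-m) * (volume (M \ F)).toReal := by
        rw [hic, hmeq]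
    _ ≤ (∫ u in M ∩ F, Real.exp (-u)) + ∫ u in M \ F, Real.exp (-u) := by linarith
    _ = ∫ u in M, Real.exp (-u) := split_M
    _ = 1 - Real.exp (-m) := hMint

/-- The convolution identity: `f_{k+1}(r) = ∫_0^r f_k(t) e^{-(r-t)} dt` for `r ≥ 0`. -/
lemma gammaDens_conv (k : ℕ) {r : ℝ} (hr : 0 ≤ r) :
    (∫ t in Set.Ioc 0 r, gammaDens k t * Real.exp (-(r - t))) = gammaDens (k + 1) r := by
  have hcongr : ∀ t ∈ Set.Ioc (0:ℝ) r,
      gammaDens k t * Real.exp (-(r - t)) = t ^ k * (Real.exp (-r) / (Nat.factorial k)) := by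
    intro t _
    unfold gammaDens
    have hexp : Real.exp (-t) * Real.exp (-(r - t)) = Real.exp (-r) := by
      rw [← Real.exp_add]; congr 1; ring
    rw [div_mul_eq_mul_div, mul_assoc, hexp]
    ring
  rw [setIntegral_congr_fun measurableSet_Ioc hcongr]
  rw [integral_mul_const]
  rw [← intervalIntegral.integral_of_le hr, integral_pow]
  unfold gammaDens
  rw [Nat.factorial_succ]
  push_cast
  have h1 : ((k : ℝ) + 1) ≠ 0 := by positivity
  have h2 : ((Nat.factorial k : ℝ)) ≠ 0 := Nat.cast_ne_zero.mpr (Nat.factorial_ne_zero k)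
  field_simp
  simp

/-- Total mass of the gamma density is 1. -/
lemma gammaDens_total (k : ℕ) : (∫ t in Set.Ioi (0:ℝ), gammaDens k t) = 1 := by
  have h0 : (0:ℝ) < (k : ℝ) + 1 := by positivity
  have hg := Real.Gamma_eq_integral h0
  have hg2 : Real.Gamma ((k : ℝ) + 1) = Nat.factorial k := Real.Gamma_nat_eq_factorial k
  have hi : (∫ x in Set.Ioi (0:ℝ), Real.exp (-x) * x ^ ((k : ℝ) + 1 - 1))
      = ∫ x in Set.Ioi (0:ℝ), Real.exp (-x) * x ^ k := by
    refine setIntegral_congr_fun measurableSet_Ioi fun x hx => ?_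
    rw [show ((k : ℝ) + 1 - 1) = (k : ℝ) by ring, Real.rpow_natCast]
  have key : (∫ x in Set.Ioi (0:ℝ), Real.exp (-x) * x ^ k) = Nat.factorial k := by
    rw [← hi, ← hg, hg2]
  unfold gammaDens
  rw [MeasureTheory.integral_div]
  rw [show (∫ t in Set.Ioi (0:ℝ), t ^ k * Real.exp (-t))
      = ∫ x in Set.Ioi (0:ℝ), Real.exp (-x) * x ^ k by
    refine setIntegral_congr_fun measurableSet_Ioi fun x _ => ?_; ring]
  rw [key, div_self (Nat.cast_ne_zero.mpr (Nat.factorial_ne_zero k))]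

lemma integrableOn_gammaDens (k : ℕ) : IntegrableOn (gammaDens k) (Set.Ioi (0:ℝ)) := by
  have h0 : (0:ℝ) < (k : ℝ) + 1 := by positivity
  have h := Real.GammaIntegral_convergent h0
  have h2 : IntegrableOn (fun x : ℝ => Real.exp (-x) * x ^ k) (Set.Ioi 0) := by
    refine h.congr_fun (fun x hx => ?_) measurableSet_Ioi
    rw [show ((k : ℝ) + 1 - 1) = (k : ℝ) by ring]
    beta_reduce
    rw [Real.rpow_natCast]
  have h4 : IntegrableOn (fun x : ℝ => Real.exp (-x) * x ^ k / (Nat.factorial k))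
      (Set.Ioi 0) := h2.div_const _
  refine h4.congr_fun (fun x _ => ?_) measurableSet_Ioi
  unfold gammaDens
  ring

theorem stmt_7 (k : ℕ) (E : Set ℝ) (hE : MeasurableSet E) (hE0 : E ⊆ Set.Ici 0)
    (hfin : volume E < ⊤) :
    (∫ r in E, gammaDens k r) ≤ 1 - Real.exp (-(volume E).toReal) ∧
    (∫ r in (0:ℝ)..(volume E).toReal, Real.exp (-r)) = 1 - Real.exp (-(volume E).toReal) := by
  set s := (volume E).toReal with hs_def
  have hs : 0 ≤ s := ENNReal.toReal_nonneg
  have hK : 0 ≤ 1 - Real.exp (-s) := by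
    have : Real.exp (-s) ≤ 1 := Real.exp_le_one_iff.mpr (neg_nonpos.mpr hs)
    linarith
  refine ⟨?_, exp_neg_interval_integral s⟩
  -- base lemma consequence for any measurable subset of [0,∞) of measure ≤ volume E
  have base : ∀ (F : Set ℝ), MeasurableSet F → F ⊆ Set.Ici 0 → volume F ≤ volume E →
      (∫ u in F, Real.exp (-u)) ≤ 1 - Real.exp (-s) := by
    intro F hFm hF0 hFle
    have hFfin : volume F < ⊤ := lt_of_le_of_lt hFle hfin
    refine (base_exp F hFm hF0 hFfin).trans ?_
    have : (volume F).toReal ≤ s := ENNReal.toReal_mono hfin.ne hFle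
    have := Real.exp_le_exp.mpr (neg_le_neg this)
    linarith
  induction k with
  | zero =>
      have : (∫ r in E, gammaDens 0 r) = ∫ r in E, Real.exp (-r) := by
        refine setIntegral_congr_fun hE fun r _ => ?_
        unfold gammaDens; simp
      rw [this]
      exact base E hE hE0 le_rfl
  | succ k _ =>
      -- work with lintegrals
      have hmeas : Measurable (gammaDens (k + 1)) := (continuous_gammaDens (k+1)).measurable
      have hnn : 0 ≤ᵐ[volume.restrict E] gammaDens (k + 1) := by
        filter_upwards [ae_restrict_mem hE] with r hr
        have hr0 : 0 ≤ r := hE0 hr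
        unfold gammaDens
        positivity
      rw [MeasureTheory.integral_eq_lintegral_of_nonneg_ae hnn
        hmeas.aestronglyMeasurable.restrict]
      refine ENNReal.toReal_le_of_le_ofReal hK ?_
      -- the product kernel
      set G : ℝ × ℝ → ENNReal := fun p =>
        Set.indicator {q : ℝ × ℝ | 0 < q.1 ∧ q.1 ≤ q.2}
          (fun q => ENNReal.ofReal (gammaDens k q.1 * Real.exp (-(q.2 - q.1)))) p with hG_def
      have hGmeas : Measurable G := by
        apply Measurable.indicator
        · apply ENNReal.measurable_ofReal.comp
          apply Measurable.mul
          · exact (continuous_gammaDens k).measurable.comp measurable_fst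
          · exact (Real.continuous_exp.comp (continuous_snd.sub continuous_fst).neg).measurable
        · exact (measurableSet_lt measurable_const measurable_fst).inter
            (measurableSet_le measurable_fst measurable_snd)
      -- step 1: rewrite the integrand on E via the convolution identity
      have step1 : (∫⁻ r in E, ENNReal.ofReal (gammaDens (k + 1) r))
          = ∫⁻ r in E, ∫⁻ t, G (t, r) := by
        refine setLIntegral_congr_fun hE (fun r hr => ?_)
        have hr0 : 0 ≤ r := hE0 hr
        have hint : IntegrableOn (fun t => gammaDens k t * Real.exp (-(r - t)))
            (Set.Ioc 0 r) := by
          apply Continuous.integrableOn_Ioc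
          exact (continuous_gammaDens k).mul (by fun_prop)
        have hnn' : 0 ≤ᵐ[volume.restrict (Set.Ioc 0 r)]
            fun t => gammaDens k t * Real.exp (-(r - t)) := by
          filter_upwards [ae_restrict_mem measurableSet_Ioc] with t ht
          have : 0 ≤ t := le_of_lt ht.1
          unfold gammaDens
          positivity
        have := MeasureTheory.ofReal_integral_eq_lintegral_ofReal hint hnn'
        rw [← gammaDens_conv k hr0, this,
          ← lintegral_indicator measurableSet_Ioc]
        refine lintegral_congr fun t => ?_
        simp only [hG_def, Set.indicator_apply, Set.mem_Ioc, Set.mem_setOf_eq]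
      -- step 2: swap
      have step2 : (∫⁻ r in E, ∫⁻ t, G (t, r)) = ∫⁻ t, ∫⁻ r in E, G (t, r) := by
        apply lintegral_lintegral_swap
        exact (hGmeas.comp measurable_swap).aemeasurable
      -- step 3: inner bound
      have step3 : ∀ t : ℝ, (∫⁻ r in E, G (t, r)) ≤
          Set.indicator (Set.Ioi 0)
            (fun t => ENNReal.ofReal (gammaDens k t) * ENNReal.ofReal (1 - Real.exp (-s))) t := by
        intro t
        by_cases ht : 0 < t
        · rw [Set.indicator_of_mem (Set.mem_Ioi.mpr ht)]
          have hGt : ∀ r : ℝ, G (t, r) = Set.indicator (Set.Ici t)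
              (fun r => ENNReal.ofReal (gammaDens k t * Real.exp (-(r - t)))) r := by
            intro r
            simp only [hG_def, Set.indicator_apply, Set.mem_setOf_eq, Set.mem_Ici]
            by_cases hr : t ≤ r
            · rw [if_pos ⟨ht, hr⟩, if_pos hr]
            · rw [if_neg (fun h => hr h.2), if_neg hr]
          calc (∫⁻ r in E, G (t, r))
              = ∫⁻ r in E ∩ Set.Ici t,
                  ENNReal.ofReal (gammaDens k t * Real.exp (-(r - t))) := by
                simp_rw [hGt]
                rw [lintegral_indicator measurableSet_Ici, Measure.restrict_restrict measurableSet_Ici,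
                  Set.inter_comm]
            _ = ENNReal.ofReal (gammaDens k t) *
                  ∫⁻ r in E ∩ Set.Ici t, ENNReal.ofReal (Real.exp (-(r - t))) := by
                have hgnn : 0 ≤ gammaDens k t := by
                  unfold gammaDens; positivity
                have hmexp : Measurable fun r : ℝ => ENNReal.ofReal (Real.exp (-(r - t))) := by
                  apply Measurable.ennreal_ofReal
                  fun_prop
                rw [← MeasureTheory.lintegral_const_mul _ hmexp]
                congr 1
                ext r
                rw [← ENNReal.ofReal_mul hgnn]
            _ ≤ ENNReal.ofReal (gammaDens k t) * ENNReal.ofReal (1 - Real.exp (-s)) := by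
                gcongr
                -- bound the exponential integral over the translated set
                set A : Set ℝ := E ∩ Set.Ici t with hA_def
                have hAmeas : MeasurableSet A := hE.inter measurableSet_Ici
                have hAfin : volume A < ⊤ :=
                  lt_of_le_of_lt (measure_mono Set.inter_subset_left) hfin
                have hint' : IntegrableOn (fun r => Real.exp (-(r - t))) A := by
                  refine Measure.integrableOn_of_bounded (M := 1) hAfin.ne ?_ ?_
                  · exact (Real.continuous_exp.comp
                      (continuous_id.sub continuous_const).neg).aestronglyMeasurable
                  · filter_upwards [ae_restrict_mem hAmeas] with r hr
                    rw [Real.norm_eq_abs, abs_of_pos (Real.exp_pos _)]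
                    exact Real.exp_le_one_iff.mpr (neg_nonpos.mpr (sub_nonneg.mpr hr.2))
                have hnn'' : 0 ≤ᵐ[volume.restrict A] fun r => Real.exp (-(r - t)) :=
                  Filter.Eventually.of_forall fun r => (Real.exp_pos _).le
                rw [← MeasureTheory.ofReal_integral_eq_lintegral_ofReal hint' hnn'']
                apply ENNReal.ofReal_le_ofReal
                -- translate
                have htrans : (∫ r in A, Real.exp (-(r - t)))
                    = ∫ u in (fun u => u + t) ⁻¹' A, Real.exp (-u) := by
                  have := (measurePreserving_add_right volume t).setIntegral_preimage_emb
                    (measurableEmbedding_addRight t)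
                    (fun r => Real.exp (-(r - t))) A
                  rw [← this]
                  congr 1
                  ext u
                  congr 1
                  ring
                rw [htrans]
                set B : Set ℝ := (fun u => u + t) ⁻¹' A with hB_def
                have hBmeas : MeasurableSet B := hAmeas.preimage (measurable_add_const t)
                have hB0 : B ⊆ Set.Ici 0 := by
                  intro u hu
                  have : u + t ∈ Set.Ici t := hu.2
                  simpa using this
                have hBvol : volume B = volume A :=
                  (measurePreserving_add_right volume t).measure_preimage
                    hAmeas.nullMeasurableSet
                exact base B hBmeas hB0
                  (hBvol ▸ (measure_mono Set.inter_subset_left))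
        · have : ∀ r : ℝ, G (t, r) = 0 := by
            intro r
            rw [hG_def]
            exact Set.indicator_of_notMem (fun h => ht h.1) _
          simp only [this, lintegral_zero]
          exact zero_le
      -- step 4: total mass
      have step4 : (∫⁻ t, Set.indicator (Set.Ioi 0)
            (fun t => ENNReal.ofReal (gammaDens k t) * ENNReal.ofReal (1 - Real.exp (-s))) t)
          = ENNReal.ofReal (1 - Real.exp (-s)) := by
        rw [lintegral_indicator measurableSet_Ioi]
        have hnn3 : 0 ≤ᵐ[volume.restrict (Set.Ioi (0:ℝ))] gammaDens k := by
          filter_upwards [ae_restrict_mem measurableSet_Ioi] with t ht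
          unfold gammaDens
          have : (0:ℝ) ≤ t := le_of_lt ht
          positivity
        calc (∫⁻ t in Set.Ioi (0:ℝ),
              ENNReal.ofReal (gammaDens k t) * ENNReal.ofReal (1 - Real.exp (-s)))
            = (∫⁻ t in Set.Ioi (0:ℝ), ENNReal.ofReal (gammaDens k t))
                * ENNReal.ofReal (1 - Real.exp (-s)) := by
              rw [lintegral_mul_const _
                (Measurable.ennreal_ofReal (continuous_gammaDens k).measurable)]
          _ = ENNReal.ofReal (1 - Real.exp (-s)) := by
              rw [← MeasureTheory.ofReal_integral_eq_lintegral_ofReal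
                (integrableOn_gammaDens k) hnn3, gammaDens_total k]
              simp
      calc (∫⁻ r in E, ENNReal.ofReal (gammaDens (k + 1) r))
          = ∫⁻ t, ∫⁻ r in E, G (t, r) := by rw [step1, step2]
        _ ≤ ∫⁻ t, Set.indicator (Set.Ioi 0)
              (fun t => ENNReal.ofReal (gammaDens k t)
                * ENNReal.ofReal (1 - Real.exp (-s))) t := lintegral_mono step3
        _ = ENNReal.ofReal (1 - Real.exp (-s)) := step4
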